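/- arXiv:0801.3398 — 2 statements merged into one kernel-verified Lean document; each statement's English description precedes it below -/
import Mathlib

section
/- Let x₁ = ln(1 + √2) and define φ: ℝ → ℝ piecewise by φ(x) = 4·arctan(e^{x − x₁}) for x ≤ 0 and φ(x) = π − 4·arctan(e^{−x − x₁}) for x ≥ 0. Then φ is continuously differentiable on ℝ (in particular φ(0) = π/2 and the two one-sided derivatives at 0 agree), φ satisfies φ'' = sin(φ) on (−∞,0) and φ'' = sin(φ − π) on (0,∞), φ(x) → 0 as x → −∞, and φ(x) → π as x → +∞. -/
open Real Filter Topology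

/-- First-derivative candidate on the left. -/
noncomputable def semiF (x₁ x : ℝ) : ℝ :=
  4 * Real.exp (x - x₁) / (1 + Real.exp (x - x₁) ^ 2)

/-- First-derivative candidate on the right. -/
noncomputable def semiG (x₁ x : ℝ) : ℝ :=
  4 * Real.exp (-x - x₁) / (1 + Real.exp (-x - x₁) ^ 2)

/-- Glued derivative. -/
noncomputable def semiD (x₁ x : ℝ) : ℝ := if x ≤ 0 then semiF x₁ x else semiG x₁ x

lemma sin_four_arctan (y : ℝ) :
    Real.sin (4 * Real.arctan y) = 4 * y * (1 - y ^ 2) / (1 + y ^ 2) ^ 2 := by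
  have hs : Real.sqrt (1 + y ^ 2) ^ 2 = 1 + y ^ 2 := Real.sq_sqrt (by positivity)
  have hs0 : Real.sqrt (1 + y ^ 2) ≠ 0 := by positivity
  have h4 : (4 : ℝ) * Real.arctan y = 2 * (2 * Real.arctan y) := by ring
  rw [h4, Real.sin_two_mul, Real.sin_two_mul, Real.cos_two_mul, Real.sin_arctan,
    Real.cos_arctan]
  field_simp
  rw [show Real.sqrt (1 + y ^ 2) ^ 4 = (Real.sqrt (1 + y ^ 2) ^ 2) ^ 2 by ring, hs]
  ring

lemma arctan_sqrt_two_sub_one : Real.arctan (Real.sqrt 2 - 1) = π / 8 := by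
  have s2 : Real.sqrt 2 ^ 2 = 2 := Real.sq_sqrt (by norm_num)
  have s2n : (0:ℝ) ≤ Real.sqrt 2 := Real.sqrt_nonneg 2
  have h1le : (1:ℝ) ≤ Real.sqrt 2 := by nlinarith
  have hps : (0:ℝ) < Real.sqrt (2 + Real.sqrt 2) := Real.sqrt_pos.mpr (by nlinarith)
  have hsq : Real.sqrt (2 + Real.sqrt 2) ^ 2 = 2 + Real.sqrt 2 :=
    Real.sq_sqrt (by nlinarith)
  have h1 : Real.sqrt (2 - Real.sqrt 2) = (Real.sqrt 2 - 1) * Real.sqrt (2 + Real.sqrt 2) := by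
    rw [show (2:ℝ) - Real.sqrt 2 = ((Real.sqrt 2 - 1) * Real.sqrt (2 + Real.sqrt 2)) ^ 2 by
      nlinarith]
    exact Real.sqrt_sq (by nlinarith)
  have htan : Real.tan (π / 8) = Real.sqrt 2 - 1 := by
    rw [Real.tan_eq_sin_div_cos, Real.sin_pi_div_eight, Real.cos_pi_div_eight, h1]
    field_simp
  rw [← htan, Real.arctan_tan] <;> nlinarith [Real.pi_pos]

lemma hasDerivAt_semif (x₁ x : ℝ) :
    HasDerivAt (fun x => 4 * Real.arctan (Real.exp (x - x₁))) (semiF x₁ x) x := by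
  have he : HasDerivAt (fun x : ℝ => Real.exp (x - x₁)) (Real.exp (x - x₁)) x := by
    simpa using ((hasDerivAt_id x).sub_const x₁).exp
  have h := ((Real.hasDerivAt_arctan (Real.exp (x - x₁))).comp x he).const_mul 4
  refine h.congr_deriv ?_
  have hne : (1:ℝ) + Real.exp (x - x₁) ^ 2 ≠ 0 := by positivity
  simp only [semiF]
  field_simp

lemma hasDerivAt_semig (x₁ x : ℝ) :
    HasDerivAt (fun x => π - 4 * Real.arctan (Real.exp (-x - x₁))) (semiG x₁ x) x := by
  have he : HasDerivAt (fun x : ℝ => Real.exp (-x - x₁)) (-Real.exp (-x - x₁)) x := by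
    simpa using (((hasDerivAt_id x).neg).sub_const x₁).exp
  have h :=
    (((Real.hasDerivAt_arctan (Real.exp (-x - x₁))).comp x he).const_mul 4).const_sub π
  refine h.congr_deriv ?_
  have hne : (1:ℝ) + Real.exp (-x - x₁) ^ 2 ≠ 0 := by positivity
  simp only [semiG]
  field_simp

lemma hasDerivAt_semiF (x₁ x : ℝ) :
    HasDerivAt (semiF x₁)
      (4 * Real.exp (x - x₁) * (1 - Real.exp (x - x₁) ^ 2) /
        (1 + Real.exp (x - x₁) ^ 2) ^ 2) x := by
  have he : HasDerivAt (fun x : ℝ => Real.exp (x - x₁)) (Real.exp (x - x₁)) x := by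
    simpa using ((hasDerivAt_id x).sub_const x₁).exp
  have hnum := he.const_mul 4
  have hden : HasDerivAt (fun x : ℝ => 1 + Real.exp (x - x₁) ^ 2)
      (2 * Real.exp (x - x₁) ^ 2) x := by
    have h2 := (he.pow 2).const_add 1
    refine h2.congr_deriv ?_
    ring
  have hpos : (1:ℝ) + Real.exp (x - x₁) ^ 2 ≠ 0 := by positivity
  have h := hnum.div hden hpos
  refine h.congr_deriv ?_
  field_simp
  ring

lemma hasDerivAt_semiG (x₁ x : ℝ) :
    HasDerivAt (semiG x₁)
      (-(4 * Real.exp (-x - x₁) * (1 - Real.exp (-x - x₁) ^ 2) /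
        (1 + Real.exp (-x - x₁) ^ 2) ^ 2)) x := by
  have he : HasDerivAt (fun x : ℝ => Real.exp (-x - x₁)) (-Real.exp (-x - x₁)) x := by
    simpa using (((hasDerivAt_id x).neg).sub_const x₁).exp
  have hnum := he.const_mul 4
  have hden : HasDerivAt (fun x : ℝ => 1 + Real.exp (-x - x₁) ^ 2)
      (-(2 * Real.exp (-x - x₁) ^ 2)) x := by
    have h2 := (he.pow 2).const_add 1
    refine h2.congr_deriv ?_
    ring
  have hpos : (1:ℝ) + Real.exp (-x - x₁) ^ 2 ≠ 0 := by positivity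
  have h := hnum.div hden hpos
  refine h.congr_deriv ?_
  field_simp
  ring

/-- The explicit type-1 π-kink of the unforced 0-π sine-Gordon equation:
with `x₁ = ln(1+√2)`, the function `φ(x) = 4 arctan(e^{x-x₁})` for `x ≤ 0`,
`φ(x) = π - 4 arctan(e^{-x-x₁})` for `x > 0`, is C¹, satisfies `φ(0) = π/2`,
`φ'' = sin φ` on `(-∞,0)`, `φ'' = sin(φ - π)` on `(0,∞)`, with limits `0` at
`-∞` and `π` at `+∞`. -/
theorem type1_pi_kink
    (x₁ : ℝ) (hx₁ : x₁ = Real.log (1 + Real.sqrt 2))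
    (φ : ℝ → ℝ)
    (hφ : ∀ x : ℝ, φ x =
      if x ≤ 0 then 4 * arctan (exp (x - x₁)) else π - 4 * arctan (exp (-x - x₁))) :
    ContDiff ℝ 1 φ ∧
    φ 0 = π / 2 ∧
    (∀ x < (0 : ℝ), deriv (deriv φ) x = sin (φ x)) ∧
    (∀ x > (0 : ℝ), deriv (deriv φ) x = sin (φ x - π)) ∧
    Tendsto φ atBot (𝓝 0) ∧
    Tendsto φ atTop (𝓝 π) := by
  have s2 : Real.sqrt 2 ^ 2 = 2 := Real.sq_sqrt (by norm_num)
  have s2n : (0:ℝ) ≤ Real.sqrt 2 := Real.sqrt_nonneg 2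
  have hexp : Real.exp (-x₁) = Real.sqrt 2 - 1 := by
    have h1 : (Real.sqrt 2 - 1) * (1 + Real.sqrt 2) = 1 := by nlinarith
    rw [hx₁, Real.exp_neg, Real.exp_log (by positivity)]
    exact inv_eq_of_mul_eq_one_left h1
  have harc : Real.arctan (Real.exp (-x₁)) = π / 8 := by
    rw [hexp, arctan_sqrt_two_sub_one]
  have hval0 : φ 0 = π / 2 := by
    rw [hφ 0, if_pos le_rfl, show (0:ℝ) - x₁ = -x₁ by ring, harc]; ring
  have hf0g0 : 4 * Real.arctan (Real.exp ((0:ℝ) - x₁)) =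
      π - 4 * Real.arctan (Real.exp (-(0:ℝ) - x₁)) := by
    rw [show (0:ℝ) - x₁ = -x₁ by ring, show -(0:ℝ) - x₁ = -x₁ by ring, harc]; ring
  have hevf : ∀ x : ℝ, x < 0 →
      φ =ᶠ[𝓝 x] fun y => 4 * Real.arctan (Real.exp (y - x₁)) := by
    intro x hx
    filter_upwards [Iio_mem_nhds hx] with y hy
    rw [hφ y, if_pos (le_of_lt hy)]
  have hevg : ∀ x : ℝ, 0 < x →
      φ =ᶠ[𝓝 x] fun y => π - 4 * Real.arctan (Real.exp (-y - x₁)) := by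
    intro x hx
    filter_upwards [Ioi_mem_nhds hx] with y hy
    rw [hφ y, if_neg (not_le.mpr hy)]
  have hD : ∀ x : ℝ, HasDerivAt φ (semiD x₁ x) x := by
    intro x
    rcases lt_trichotomy x 0 with hx | hx | hx
    · have h := (hasDerivAt_semif x₁ x).congr_of_eventuallyEq (hevf x hx)
      simpa [semiD, if_pos hx.le] using h
    · subst hx
      have hFG : semiF x₁ 0 = semiG x₁ 0 := by
        simp only [semiF, semiG]
        norm_num
      have h1 : HasDerivWithinAt φ (semiF x₁ 0) (Set.Iic 0) 0 := by
        refine (hasDerivAt_semif x₁ 0).hasDerivWithinAt.congr ?_ ?_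
        · intro y hy
          rw [hφ y]
          exact if_pos (show y ≤ 0 from hy)
        · rw [hφ 0, if_pos le_rfl]
      have h2 : HasDerivWithinAt φ (semiF x₁ 0) (Set.Ici 0) 0 := by
        rw [hFG]
        refine (hasDerivAt_semig x₁ 0).hasDerivWithinAt.congr ?_ ?_
        · intro y hy
          rcases eq_or_lt_of_le (Set.mem_Ici.mp hy) with h | h
          · rw [hφ y, ← h, if_pos le_rfl]
            exact hf0g0
          · rw [hφ y, if_neg (not_le.mpr h)]
        · rw [hφ 0, if_pos le_rfl]
          exact hf0g0
      have h3 := h1.union h2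
      rw [Set.Iic_union_Ici, hasDerivWithinAt_univ] at h3
      simpa [semiD] using h3
    · have h := (hasDerivAt_semig x₁ x).congr_of_eventuallyEq (hevg x hx)
      simpa [semiD, if_neg (not_le.mpr hx)] using h
  have hderiv : deriv φ = semiD x₁ := funext fun x => (hD x).deriv
  have hcontF : Continuous (semiF x₁) :=
    Differentiable.continuous fun x => (hasDerivAt_semiF x₁ x).differentiableAt
  have hcontG : Continuous (semiG x₁) :=
    Differentiable.continuous fun x => (hasDerivAt_semiG x₁ x).differentiableAt
  have hcontD : Continuous (semiD x₁) := by
    refine hcontF.if_le hcontG continuous_id continuous_const ?_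
    intro x hx
    change x = 0 at hx
    subst hx
    simp only [semiF, semiG]
    norm_num
  refine ⟨?_, hval0, ?_, ?_, ?_, ?_⟩
  · rw [contDiff_one_iff_deriv]
    exact ⟨fun x => (hD x).differentiableAt, hderiv ▸ hcontD⟩
  · intro x hx
    have hevD : deriv φ =ᶠ[𝓝 x] semiF x₁ := by
      rw [hderiv]
      filter_upwards [Iio_mem_nhds hx] with y hy
      simp only [Set.mem_Iio] at hy
      simp [semiD, if_pos hy.le]
    rw [hevD.deriv_eq, (hasDerivAt_semiF x₁ x).deriv, hφ x, if_pos hx.le,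
      sin_four_arctan]
  · intro x hx
    have hevD : deriv φ =ᶠ[𝓝 x] semiG x₁ := by
      rw [hderiv]
      filter_upwards [Ioi_mem_nhds hx] with y hy
      simp only [Set.mem_Ioi] at hy
      simp [semiD, if_neg (not_le.mpr hy)]
    rw [hevD.deriv_eq, (hasDerivAt_semiG x₁ x).deriv, hφ x, if_neg (not_le.mpr hx),
      show π - 4 * Real.arctan (Real.exp (-x - x₁)) - π
        = -(4 * Real.arctan (Real.exp (-x - x₁))) by ring,
      Real.sin_neg, sin_four_arctan]
  · have hbot : Tendsto (fun x : ℝ => 4 * Real.arctan (Real.exp (x - x₁))) atBot (𝓝 0) := by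
      have h1 : Tendsto (fun x : ℝ => x - x₁) atBot atBot := by
        simpa [sub_eq_add_neg] using tendsto_atBot_add_const_right atBot (-x₁)
          (tendsto_id : Tendsto (id : ℝ → ℝ) atBot atBot)
      have h2 : Tendsto (fun x : ℝ => Real.exp (x - x₁)) atBot (𝓝 0) :=
        Real.tendsto_exp_atBot.comp h1
      have h3 : Tendsto (fun x : ℝ => Real.arctan (Real.exp (x - x₁))) atBot (𝓝 0) := by
        have h := (Real.continuous_arctan.tendsto 0).comp h2
        simpa [Real.arctan_zero, Function.comp_def] using h
      have h4 := h3.const_mul (4:ℝ)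
      simpa using h4
    refine hbot.congr' ?_
    filter_upwards [eventually_le_atBot (0:ℝ)] with y hy
    rw [hφ y, if_pos hy]
  · have htop : Tendsto (fun x : ℝ => π - 4 * Real.arctan (Real.exp (-x - x₁))) atTop
        (𝓝 π) := by
      have h1 : Tendsto (fun x : ℝ => -x - x₁) atTop atBot := by
        simpa [sub_eq_add_neg] using tendsto_atBot_add_const_right atTop (-x₁)
          (tendsto_neg_atTop_atBot (G := ℝ))
      have h2 : Tendsto (fun x : ℝ => Real.exp (-x - x₁)) atTop (𝓝 0) :=
        Real.tendsto_exp_atBot.comp h1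
      have h3 : Tendsto (fun x : ℝ => Real.arctan (Real.exp (-x - x₁))) atTop (𝓝 0) := by
        have h := (Real.continuous_arctan.tendsto 0).comp h2
        simpa [Real.arctan_zero, Function.comp_def] using h
      have h4 := (h3.const_mul (4:ℝ)).const_sub π
      simpa using h4
    refine htop.congr' ?_
    filter_upwards [eventually_gt_atTop (0:ℝ)] with y hy
    rw [hφ y, if_neg (not_le.mpr hy)]
end

section
/- Let x₁ = ln(1 + √2) and define φ: ℝ → ℝ piecewise by φ(x) = 4·arctan(e^{x + x₁}) for x ≤ 0 and φ(x) = 3π − 4·arctan(e^{−x + x₁}) for x ≥ 0. Then φ is continuously differentiable on ℝ (with φ(0) = 3π/2), satisfies φ'' = sin(φ) on (−∞,0) and φ'' = sin(φ − π) on (0,∞), φ(x) → 0 as x → −∞, and φ(x) → 3π as x → +∞. -/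
open Real Filter Topology

lemma my_arctan_sqrt2_sub_one : arctan (Real.sqrt 2 - 1) = π / 8 := by
  have hs : Real.sqrt 2 ^ 2 = 2 := Real.sq_sqrt (by norm_num)
  have hnn := Real.sqrt_nonneg 2
  have h1 : Real.sqrt 2 < 2 := by nlinarith
  have h0 : (1 : ℝ) < Real.sqrt 2 := by nlinarith
  set a := arctan (Real.sqrt 2 - 1) with ha
  have ha1 : a < π / 4 := by
    have := Real.arctan_strictMono (show Real.sqrt 2 - 1 < 1 by linarith)
    simpa [Real.arctan_one] using this
  have ha0 : 0 < a := by
    have := Real.arctan_strictMono (show (0:ℝ) < Real.sqrt 2 - 1 by linarith)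
    rw [Real.arctan_zero] at this; exact this
  have htan : Real.tan (2 * a) = 1 := by
    rw [Real.tan_two_mul, ha, Real.tan_arctan]
    have hden : 1 - (Real.sqrt 2 - 1) ^ 2 ≠ 0 := by nlinarith
    field_simp
    nlinarith
  have harc : arctan (Real.tan (2 * a)) = 2 * a :=
    Real.arctan_tan (by linarith [Real.pi_pos]) (by linarith)
  rw [htan, Real.arctan_one] at harc
  linarith

lemma my_arctan_one_add_sqrt2 : arctan (1 + Real.sqrt 2) = 3 * π / 8 := by
  have hs : Real.sqrt 2 ^ 2 = 2 := Real.sq_sqrt (by norm_num)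
  have hnn := Real.sqrt_nonneg 2
  have h0 : (1 : ℝ) < Real.sqrt 2 := by nlinarith
  have hinv : (1 + Real.sqrt 2) = (Real.sqrt 2 - 1)⁻¹ := by
    exact eq_inv_of_mul_eq_one_right (by nlinarith)
  rw [hinv, Real.arctan_inv_of_pos (by linarith), my_arctan_sqrt2_sub_one]
  ring

lemma my_sin_four_arctan (t : ℝ) :
    sin (4 * arctan t) = 4 * t * (1 - t ^ 2) / (1 + t ^ 2) ^ 2 := by
  have h4 : (4 : ℝ) * arctan t = 2 * (2 * arctan t) := by ring
  rw [h4, Real.sin_two_mul, Real.sin_two_mul, Real.cos_two_mul,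
    Real.sin_arctan, Real.cos_arctan]
  have hp : (0:ℝ) < 1 + t ^ 2 := by positivity
  have hs : Real.sqrt (1 + t ^ 2) ^ 2 = 1 + t ^ 2 := Real.sq_sqrt hp.le
  have hs0 : 0 < Real.sqrt (1 + t ^ 2) := Real.sqrt_pos.2 hp
  field_simp
  rw [show Real.sqrt (1 + t ^ 2) ^ 4 = (Real.sqrt (1 + t ^ 2) ^ 2) ^ 2 by ring, hs]
  ring

/-- The explicit static 3π-kink of the unforced 0-π sine-Gordon equation:
with `x₁ = ln(1+√2)`, the function `φ(x) = 4 arctan(e^{x+x₁})` for `x ≤ 0`,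
`φ(x) = 3π - 4 arctan(e^{-x+x₁})` for `x > 0`, is C¹, satisfies `φ(0) = 3π/2`,
`φ'' = sin φ` on `(-∞,0)`, `φ'' = sin(φ - π)` on `(0,∞)`, with limits `0` at
`-∞` and `3π` at `+∞`. -/
theorem static_3pi_kink
    (x₁ : ℝ) (hx₁ : x₁ = Real.log (1 + Real.sqrt 2))
    (φ : ℝ → ℝ)
    (hφ : ∀ x : ℝ, φ x =
      if x ≤ 0 then 4 * arctan (exp (x + x₁))
      else 3 * π - 4 * arctan (exp (-x + x₁))) :
    ContDiff ℝ 1 φ ∧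
    φ 0 = 3 * π / 2 ∧
    (∀ x < (0 : ℝ), deriv (deriv φ) x = sin (φ x)) ∧
    (∀ x > (0 : ℝ), deriv (deriv φ) x = sin (φ x - π)) ∧
    Tendsto φ atBot (𝓝 0) ∧
    Tendsto φ atTop (𝓝 (3 * π)) := by
  have hex₁ : Real.exp x₁ = 1 + Real.sqrt 2 := by
    rw [hx₁]; exact Real.exp_log (by positivity)
  set f : ℝ → ℝ := fun x => 4 * arctan (exp (x + x₁)) with hf
  set g : ℝ → ℝ := fun x => 3 * π - 4 * arctan (exp (-x + x₁)) with hg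
  set ψ : ℝ → ℝ := fun x => 4 * exp (x₁ - |x|) / (1 + exp (x₁ - |x|) ^ 2) with hψ
  -- value at 0
  have hf0 : f 0 = 3 * π / 2 := by
    simp only [hf, zero_add, hex₁, my_arctan_one_add_sqrt2]; ring
  have hg0 : g 0 = 3 * π / 2 := by
    simp only [hg, neg_zero, zero_add, hex₁, my_arctan_one_add_sqrt2]; ring
  have hφf : ∀ x ≤ (0:ℝ), φ x = f x := fun x hx => by rw [hφ x, if_pos hx]
  have hφg : ∀ x ≥ (0:ℝ), φ x = g x := by
    intro x hx
    rcases eq_or_lt_of_le hx with h | h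
    · rw [← h, hφ 0, if_pos le_rfl]
      show f 0 = g 0
      rw [hf0, hg0]
    · rw [hφ x, if_neg (not_le.2 h)]
  have hφ0 : φ 0 = 3 * π / 2 := by rw [hφf 0 le_rfl, hf0]
  -- derivatives of f and g
  have hf' : ∀ x : ℝ, HasDerivAt f
      (4 * exp (x + x₁) / (1 + exp (x + x₁) ^ 2)) x := by
    intro x
    have h1 : HasDerivAt (fun y : ℝ => y + x₁) 1 x := (hasDerivAt_id x).add_const x₁
    have h2 := (Real.hasDerivAt_exp (x + x₁)).comp x h1
    have h3 := (Real.hasDerivAt_arctan (exp (x + x₁))).comp x h2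
    have h4 := h3.const_mul (4 : ℝ)
    refine h4.congr_deriv ?_
    field_simp
  have hg' : ∀ x : ℝ, HasDerivAt g
      (4 * exp (-x + x₁) / (1 + exp (-x + x₁) ^ 2)) x := by
    intro x
    have h1 : HasDerivAt (fun y : ℝ => -y + x₁) (-1) x := by
      simpa using (hasDerivAt_id x).neg.add_const x₁
    have h2 := (Real.hasDerivAt_exp (-x + x₁)).comp x h1
    have h3 := (Real.hasDerivAt_arctan (exp (-x + x₁))).comp x h2
    have h4 := ((h3.const_mul (4 : ℝ)).neg).const_add (3 * π)
    refine h4.congr_deriv ?_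
    field_simp
  have hψf : ∀ x ≤ (0:ℝ), ψ x = 4 * exp (x + x₁) / (1 + exp (x + x₁) ^ 2) := by
    intro x hx
    simp only [hψ, abs_of_nonpos hx]
    ring_nf
  have hψg : ∀ x ≥ (0:ℝ), ψ x = 4 * exp (-x + x₁) / (1 + exp (-x + x₁) ^ 2) := by
    intro x hx
    simp only [hψ, abs_of_nonneg hx]
    ring_nf
  -- φ has derivative ψ everywhere
  have hder : ∀ x : ℝ, HasDerivAt φ (ψ x) x := by
    intro x
    rcases lt_trichotomy x 0 with hx | hx | hx
    · have heq : φ =ᶠ[𝓝 x] f := by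
        filter_upwards [Iio_mem_nhds hx] with y hy
        exact hφf y (le_of_lt hy)
      rw [hψf x hx.le]
      exact (hf' x).congr_of_eventuallyEq heq
    · subst hx
      have hIic : HasDerivWithinAt φ (ψ 0) (Set.Iic 0) 0 := by
        rw [hψf 0 le_rfl]
        exact ((hf' 0).hasDerivWithinAt).congr (fun y hy => hφf y hy) (hφf 0 le_rfl)
      have hIci : HasDerivWithinAt φ (ψ 0) (Set.Ici 0) 0 := by
        rw [hψg 0 le_rfl]
        exact ((hg' 0).hasDerivWithinAt).congr (fun y hy => hφg y hy) (hφg 0 le_rfl)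
      have hu := hIic.union hIci
      rw [Set.Iic_union_Ici] at hu
      exact hu.hasDerivAt (by simp [Filter.univ_mem])
    · have heq : φ =ᶠ[𝓝 x] g := by
        filter_upwards [Ioi_mem_nhds hx] with y hy
        exact hφg y (le_of_lt hy)
      rw [hψg x hx.le]
      exact (hg' x).congr_of_eventuallyEq heq
  have hderiv : deriv φ = ψ := funext fun x => (hder x).deriv
  -- continuity of ψ
  have hcψ : Continuous ψ := by
    apply Continuous.div
    · fun_prop
    · fun_prop
    · intro x; positivity
  have hC1 : ContDiff ℝ 1 φ := by
    rw [contDiff_one_iff_deriv]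
    exact ⟨fun x => (hder x).differentiableAt, hderiv ▸ hcψ⟩
  refine ⟨hC1, hφ0, ?_, ?_, ?_, ?_⟩
  · -- second derivative on (-∞, 0)
    intro x hx
    rw [hderiv]
    set t := exp (x + x₁) with ht
    have hψ' : HasDerivAt ψ (4 * t * (1 - t ^ 2) / (1 + t ^ 2) ^ 2) x := by
      have heq : ψ =ᶠ[𝓝 x] fun y => 4 * exp (y + x₁) / (1 + exp (y + x₁) ^ 2) := by
        filter_upwards [Iio_mem_nhds hx] with y hy
        exact hψf y (le_of_lt hy)
      have h1 : HasDerivAt (fun y : ℝ => exp (y + x₁)) t x := by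
        simpa [Function.comp_def] using (Real.hasDerivAt_exp (x + x₁)).comp x ((hasDerivAt_id x).add_const x₁)
      have hnum : HasDerivAt (fun y : ℝ => 4 * exp (y + x₁)) (4 * t) x := h1.const_mul 4
      have hden : HasDerivAt (fun y : ℝ => 1 + exp (y + x₁) ^ 2) (2 * t * t) x := by
        have := (h1.pow 2).const_add (1 : ℝ)
        simpa [mul_comm, mul_assoc] using this
      have hd0 : (1 + t ^ 2) ≠ 0 := by positivity
      have hq := hnum.div hden hd0
      refine HasDerivAt.congr_of_eventuallyEq ?_ heq
      refine hq.congr_deriv ?_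
      field_simp
      ring
    rw [hψ'.deriv, hφf x hx.le, hf, my_sin_four_arctan]
  · -- second derivative on (0, ∞)
    intro x hx
    rw [hderiv]
    set t := exp (-x + x₁) with ht
    have hψ' : HasDerivAt ψ (4 * t * (t ^ 2 - 1) / (1 + t ^ 2) ^ 2) x := by
      have heq : ψ =ᶠ[𝓝 x] fun y => 4 * exp (-y + x₁) / (1 + exp (-y + x₁) ^ 2) := by
        filter_upwards [Ioi_mem_nhds hx] with y hy
        exact hψg y (le_of_lt hy)
      have h1 : HasDerivAt (fun y : ℝ => exp (-y + x₁)) (-t) x := by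
        have hi : HasDerivAt (fun y : ℝ => -y + x₁) (-1) x := by
          simpa using (hasDerivAt_id x).neg.add_const x₁
        simpa [Function.comp_def] using (Real.hasDerivAt_exp (-x + x₁)).comp x hi
      have hnum : HasDerivAt (fun y : ℝ => 4 * exp (-y + x₁)) (4 * (-t)) x := h1.const_mul 4
      have hden : HasDerivAt (fun y : ℝ => 1 + exp (-y + x₁) ^ 2) (2 * (-t) * t) x := by
        have := (h1.pow 2).const_add (1 : ℝ)
        simpa [mul_comm, mul_assoc] using this
      have hd0 : (1 + t ^ 2) ≠ 0 := by positivity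
      have hq := hnum.div hden hd0
      refine HasDerivAt.congr_of_eventuallyEq ?_ heq
      refine hq.congr_deriv ?_
      field_simp
      ring
    rw [hψ'.deriv, hφg x hx.le, hg]
    have hval : 3 * π - 4 * arctan t - π = -(4 * arctan t) + 2 * π := by ring
    rw [hval, Real.sin_add_two_pi, Real.sin_neg, my_sin_four_arctan]
    ring
  · -- limit at -∞
    have h1 : Tendsto (fun x : ℝ => x + x₁) atBot atBot :=
      tendsto_atBot_add_const_right _ _ tendsto_id
    have h2 := Real.tendsto_exp_atBot.comp h1
    have h3 := (Real.continuous_arctan.tendsto 0).comp h2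
    have h4 : Tendsto f atBot (𝓝 0) := by
      have := h3.const_mul (4 : ℝ)
      simpa [hf, Function.comp, Real.arctan_zero] using this
    refine h4.congr' ?_
    filter_upwards [eventually_le_atBot (0:ℝ)] with x hx
    exact (hφf x hx).symm
  · -- limit at +∞
    have h1 : Tendsto (fun x : ℝ => -x + x₁) atTop atBot :=
      tendsto_atBot_add_const_right _ _ tendsto_neg_atTop_atBot
    have h2 := Real.tendsto_exp_atBot.comp h1
    have h3 := (Real.continuous_arctan.tendsto 0).comp h2
    have h4 : Tendsto g atTop (𝓝 (3 * π)) := by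
      have := (h3.const_mul (4 : ℝ)).const_sub (3 * π)
      simpa [hg, Function.comp, Real.arctan_zero] using this
    refine h4.congr' ?_
    filter_upwards [eventually_gt_atTop (0:ℝ)] with x hx
    exact (hφg x hx.le).symm
end
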